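/- Let X_1, …, X_k and Y be normed linear spaces over F, and let T, A be nonzero bounded k-linear maps from X_1 × ⋯ × X_k to Y. Then T ⊥_B A if and only if 0 lies in the convex hull of Ω(T,A) := { λ ∈ F : there exist sequences (x⃗ₙ) in S_{X_1} × ⋯ × S_{X_k} and (yₙ*) in S_{Y*} with yₙ*(T x⃗ₙ) → ‖T‖ and yₙ*(A x⃗ₙ) → λ }. -/

import Mathlib

open Filter Topology RCLike ComplexConjugate

theorem myIsCompact_convexHull {E : Type*} [NormedAddCommGroup E] [NormedSpace ℝ E]
    [FiniteDimensional ℝ E] {s : Set E} (hs : IsCompact s) :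
    IsCompact (convexHull ℝ s) := by
  classical
  rcases s.eq_empty_or_nonempty with rfl | ⟨s₀, hs₀⟩
  · simp
  set m := Module.finrank ℝ E + 1 with hm
  set D : Set ((Fin m → ℝ) × (Fin m → E)) :=
    (stdSimplex ℝ (Fin m)) ×ˢ (Set.univ.pi fun _ => s) with hD
  have hDc : IsCompact D :=
    (isCompact_stdSimplex ℝ (Fin m)).prod (isCompact_univ_pi fun _ => hs)
  set f : (Fin m → ℝ) × (Fin m → E) → E := fun p => ∑ j, p.1 j • p.2 j with hf
  have hfc : Continuous f := by
    apply continuous_finset_sum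
    intro j _
    exact ((continuous_apply j).comp continuous_fst).smul
      ((continuous_apply j).comp continuous_snd)
  have himg : convexHull ℝ s = f '' D := by
    apply Set.Subset.antisymm
    · intro x hx
      obtain ⟨ι, hι, z, w, hzs, hai, hw0, hw1, hwz⟩ :=
        eq_pos_convex_span_of_mem_convexHull hx
      have hcard : Fintype.card ι ≤ m := by
        have h1 := hai.card_le_finrank_succ
        have h2 : Module.finrank ℝ (vectorSpan ℝ (Set.range z)) ≤ Module.finrank ℝ E :=
          Submodule.finrank_le _
        omega
      obtain ⟨e⟩ : Nonempty (ι ↪ Fin m) := by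
        apply Function.Embedding.nonempty_of_card_le
        simpa using hcard
      set ω : Fin m → ℝ := fun j => if h : ∃ i, e i = j then w h.choose else 0 with hω
      set ζ : Fin m → E := fun j => if h : ∃ i, e i = j then z h.choose else s₀ with hζ
      have hchoose : ∀ i : ι, (⟨i, rfl⟩ : ∃ i', e i' = e i).choose = i := fun i =>
        e.injective (⟨i, rfl⟩ : ∃ i', e i' = e i).choose_spec
      have hωe : ∀ i, ω (e i) = w i := by
        intro i
        simp only [hω, dif_pos (⟨i, rfl⟩ : ∃ i', e i' = e i)]
        rw [hchoose]
      have hζe : ∀ i, ζ (e i) = z i := by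
        intro i
        simp only [hζ, dif_pos (⟨i, rfl⟩ : ∃ i', e i' = e i)]
        rw [hchoose]
      have hnot : ∀ j : Fin m, j ∉ Finset.univ.map e → ω j = 0 := by
        intro j hj
        simp only [hω]
        rw [dif_neg]
        rintro ⟨i, hi⟩
        exact hj (Finset.mem_map.2 ⟨i, Finset.mem_univ _, hi⟩)
      refine ⟨(ω, ζ), ⟨⟨fun j => ?_, ?_⟩, fun j _ => ?_⟩, ?_⟩
      · simp only [hω]
        split
        · exact (hw0 _).le
        · rfl
      · calc ∑ j : Fin m, ω j
            = ∑ j ∈ Finset.univ.map e, ω j :=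
              (Finset.sum_subset (Finset.subset_univ _)
                (fun j _ hj => hnot j hj)).symm
          _ = ∑ i, ω (e i) := Finset.sum_map _ e _
          _ = 1 := by simp [hωe, hw1]
      · simp only [hζ]
        split
        · exact hzs (Set.mem_range_self _)
        · exact hs₀
      · simp only [hf]
        calc ∑ j : Fin m, ω j • ζ j
            = ∑ j ∈ Finset.univ.map e, ω j • ζ j :=
              (Finset.sum_subset (Finset.subset_univ _)
                (fun j _ hj => by rw [hnot j hj, zero_smul])).symm
          _ = ∑ i, ω (e i) • ζ (e i) := Finset.sum_map _ e _
          _ = x := by simp only [hωe, hζe]; exact hwz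
    · rintro x ⟨⟨ω, ζ⟩, ⟨⟨hω0, hω1⟩, hζ⟩, rfl⟩
      exact (convex_convexHull ℝ s).sum_mem (fun i _ => hω0 i) hω1
        (fun i _ => subset_convexHull ℝ s (hζ i (Set.mem_univ i)))
  rw [himg]
  exact hDc.image hfc


theorem myRep {𝕜 : Type*} [RCLike 𝕜] (f : 𝕜 →L[ℝ] ℝ) :
    ∃ c : 𝕜, ∀ μ : 𝕜, f μ = re (conj c * μ) := by
  refine ⟨(f 1 : ℝ) + (f I : ℝ) * I, fun μ => ?_⟩
  have hμ : μ = (re μ : 𝕜) + (im μ : 𝕜) * I := (re_add_im μ).symm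
  have h1 : f μ = re μ * f 1 + im μ * f I := by
    conv_lhs => rw [hμ]
    have : (re μ : 𝕜) + (im μ : 𝕜) * I = (re μ : ℝ) • (1 : 𝕜) + (im μ : ℝ) • (I : 𝕜) := by
      simp [real_smul_eq_coe_mul]
    rw [this, map_add, map_smul, map_smul]
    simp
  have hre : re ((f 1 : 𝕜) + (f I : 𝕜) * I) = f 1 := by
    simp [mul_re, I_re]
  have him : im ((f 1 : 𝕜) + (f I : 𝕜) * I) = f I * im (I : 𝕜) := by
    simp [mul_im, I_re]
  rw [mul_re, conj_re, conj_im, hre, him, h1]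
  linear_combination (f I) * (I_im (K := 𝕜) μ).symm

theorem myNorming {𝕜 : Type*} [RCLike 𝕜] {k : ℕ} {X : Fin k → Type*}
    [∀ i, NormedAddCommGroup (X i)] [∀ i, NormedSpace 𝕜 (X i)]
    {Y : Type*} [NormedAddCommGroup Y] [NormedSpace 𝕜 Y]
    (B : ContinuousMultilinearMap 𝕜 X Y) {ε : ℝ} (hε : 0 < ε) (hεB : ε < ‖B‖) :
    ∃ (x : ∀ i, X i) (y : Y →L[𝕜] 𝕜), (∀ i, ‖x i‖ = 1) ∧ ‖y‖ = 1 ∧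
      y (B x) = (‖B x‖ : 𝕜) ∧ ‖B‖ - ε < ‖B x‖ := by
  obtain ⟨m, hm⟩ : ∃ m : ∀ i, X i, ¬ ‖B m‖ ≤ (‖B‖ - ε) * ∏ i, ‖m i‖ := by
    by_contra hcon
    push_neg at hcon
    have := (ContinuousMultilinearMap.opNorm_le_iff (f := B) (by linarith : (0:ℝ) ≤ ‖B‖ - ε)).2 hcon
    linarith
  push_neg at hm
  have hprodnn : (0:ℝ) ≤ ∏ i, ‖m i‖ := Finset.prod_nonneg fun i _ => norm_nonneg _
  have hBm : 0 < ‖B m‖ := lt_of_le_of_lt (mul_nonneg (by linarith) hprodnn) hm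
  have hmi : ∀ i, m i ≠ 0 := by
    intro i hi
    rw [B.map_coord_zero i hi] at hBm
    simp at hBm
  have hmipos : ∀ i, (0:ℝ) < ‖m i‖ := fun i => norm_pos_iff.2 (hmi i)
  have hprod : (0:ℝ) < ∏ i, ‖m i‖ := Finset.prod_pos fun i _ => hmipos i
  set x : ∀ i, X i := fun i => ((‖m i‖⁻¹ : ℝ) : 𝕜) • m i with hx
  have hxi : ∀ i, ‖x i‖ = 1 := by
    intro i
    rw [hx]
    simp only [norm_smul, norm_ofReal, abs_inv, abs_norm]
    field_simp
    exact div_self (hmipos i).ne'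
  have hBx : B x = ((∏ i, ((‖m i‖⁻¹ : ℝ) : 𝕜))) • B m := B.map_smul_univ _ m
  have hBxn : ‖B x‖ = (∏ i, ‖m i‖)⁻¹ * ‖B m‖ := by
    rw [hBx, norm_smul, norm_prod]
    congr 1
    rw [← Finset.prod_inv_distrib]
    apply Finset.prod_congr rfl
    intro i _
    rw [norm_ofReal, abs_inv, abs_norm]
  have hgt : ‖B‖ - ε < ‖B x‖ := by
    rw [hBxn, inv_mul_eq_div, lt_div_iff₀ hprod]
    exact hm
  have hBxne : B x ≠ 0 := by
    intro h0
    rw [h0] at hgt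
    simp at hgt
    linarith
  obtain ⟨y, hy1, hyx⟩ := exists_dual_vector 𝕜 (B x) (norm_ne_zero_iff.2 hBxne)
  exact ⟨x, y, hxi, hy1, hyx, hgt⟩

theorem myTendstoHelper {𝕜 : Type*} [RCLike 𝕜] {g : ℕ → 𝕜} {a : 𝕜} {b : ℕ → ℝ}
    (h : ∀ n, ‖g n - a‖ ≤ b n) (hb : Tendsto b atTop (𝓝 0)) :
    Tendsto g atTop (𝓝 a) := by
  rw [tendsto_iff_norm_sub_tendsto_zero]
  exact squeeze_zero (fun n => norm_nonneg _) h hb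

set_option maxHeartbeats 1000000 in
theorem myKey {𝕜 : Type*} [RCLike 𝕜] {k : ℕ} {X : Fin k → Type*}
    [∀ i, NormedAddCommGroup (X i)] [∀ i, NormedSpace 𝕜 (X i)]
    {Y : Type*} [NormedAddCommGroup Y] [NormedSpace 𝕜 Y]
    (T A : ContinuousMultilinearMap 𝕜 X Y) (hTpos : (0:ℝ) < ‖T‖)
    (hbound : ∀ (B : ContinuousMultilinearMap 𝕜 X Y) (x : ∀ i, X i) (y : Y →L[𝕜] 𝕜),
      (∀ i, ‖x i‖ = 1) → ‖y‖ = 1 → ‖y (B x)‖ ≤ ‖B‖)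
    (h : ∀ lam : 𝕜, ‖T‖ ≤ ‖T + lam • A‖) (c : 𝕜) :
    ∀ n : ℕ, ∃ (x : ∀ i, X i) (y : Y →L[𝕜] 𝕜),
        (∀ i, ‖x i‖ = 1) ∧ ‖y‖ = 1 ∧
        ‖y (T x) - (‖T‖:𝕜)‖ ≤
          Real.sqrt (2 * ‖T‖ * (((1:ℝ)/(n+1))^2 + ((1:ℝ)/(n+1)) * (‖c‖ * ‖A‖))) ∧
        -((1:ℝ)/(n+1)) ≤ re ((starRingEnd 𝕜) c * y (A x)) := by
      intro n
      set tn : ℝ := (1:ℝ)/(n+1) with htn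
      have htnpos : 0 < tn := by positivity
      set εn : ℝ := min (tn^2) (‖T‖/2) with hεn
      have hεpos : 0 < εn := lt_min (by positivity) (by linarith)
      set B : ContinuousMultilinearMap 𝕜 X Y := T + ((tn:𝕜) * (starRingEnd 𝕜) c) • A with hB
      have hTB : ‖T‖ ≤ ‖B‖ := h _
      have hεB : εn < ‖B‖ := lt_of_le_of_lt (min_le_right _ _) (by linarith)
      obtain ⟨x, y, hx, hy, hyx, hnorm⟩ := myNorming B hεpos hεB
      set μ : 𝕜 := y (A x) with hμ
      set z : 𝕜 := y (T x) with hz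
      set r : ℝ := ‖B x‖ with hr
      set p : ℝ := re ((starRingEnd 𝕜) c * μ) with hp
      have heq : z + (tn:𝕜) * ((starRingEnd 𝕜) c * μ) = (r:𝕜) := by
        have hBx : B x = T x + ((tn:𝕜) * (starRingEnd 𝕜) c) • A x := by
          rw [hB]
          simp [ContinuousMultilinearMap.add_apply, ContinuousMultilinearMap.smul_apply]
        rw [← hyx, hBx, map_add, map_smul, smul_eq_mul, mul_assoc]
      have hzre : re z = r - tn * p := by
        have : z = (r:𝕜) - (tn:𝕜) * ((starRingEnd 𝕜) c * μ) := by
          rw [← heq]; ring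
        rw [this, map_sub, ofReal_re, re_ofReal_mul]
      have hzn : ‖z‖ ≤ ‖T‖ := hbound T x y hx hy
      have hμn : ‖μ‖ ≤ ‖A‖ := hbound A x y hx hy
      have hpabs : |p| ≤ ‖c‖ * ‖A‖ := by
        calc |p| ≤ ‖(starRingEnd 𝕜) c * μ‖ := abs_re_le_norm _
          _ = ‖c‖ * ‖μ‖ := by rw [norm_mul, RCLike.norm_conj]
          _ ≤ ‖c‖ * ‖A‖ := by
              exact mul_le_mul_of_nonneg_left hμn (norm_nonneg _)
      have hrge : ‖T‖ - tn^2 ≤ r := by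
        have h1 : εn ≤ tn^2 := min_le_left _ _
        have : ‖B‖ - εn < r := hnorm
        linarith
      have hrezle : re z ≤ ‖T‖ := (re_le_norm z).trans hzn
      clear_value tn εn B μ z r p
      have hplb : -tn ≤ p := by
        rw [hzre] at hrezle
        have h4 : tn * -tn ≤ tn * p := by
          have h5 : tn * -tn = -(tn^2) := by ring
          linarith
        exact (mul_le_mul_iff_right₀ htnpos).1 h4
      have habs : |p| ≤ ‖c‖ * ‖A‖ := hpabs
      have hrelb : ‖T‖ - (tn^2 + tn * (‖c‖ * ‖A‖)) ≤ re z := by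
        have h6 : p ≤ ‖c‖ * ‖A‖ := (le_abs_self p).trans habs
        have h7 : tn * p ≤ tn * (‖c‖ * ‖A‖) := by
          exact mul_le_mul_of_nonneg_left h6 htnpos.le
        rw [hzre]
        linarith
      have hd0 : (0:ℝ) ≤ tn^2 + tn * (‖c‖ * ‖A‖) := by positivity
      have hsq : ‖z - (‖T‖:𝕜)‖^2 ≤ 2 * ‖T‖ * (tn^2 + tn * (‖c‖ * ‖A‖)) := by
        have e1 : ‖z - (‖T‖:𝕜)‖^2 = re (z - (‖T‖:𝕜)) * re (z - (‖T‖:𝕜))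
            + im (z - (‖T‖:𝕜)) * im (z - (‖T‖:𝕜)) := norm_sq_eq_def
        have e2 : ‖z‖^2 = re z * re z + im z * im z := norm_sq_eq_def
        have e3 : re (z - (‖T‖:𝕜)) = re z - ‖T‖ := by rw [map_sub, ofReal_re]
        have e4 : im (z - (‖T‖:𝕜)) = im z := by rw [map_sub, ofReal_im, sub_zero]
        have e5 : ‖z‖^2 ≤ ‖T‖^2 := by nlinarith [norm_nonneg z]
        rw [e1, e3, e4]
        nlinarith
      refine ⟨x, y, hx, hy, ?_, ?_⟩
      · rw [← hz]
        exact Real.le_sqrt_of_sq_le hsq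
      · rw [← hμ, ← hp]
        exact hplb

theorem stmt2 {𝕜 : Type*} [RCLike 𝕜] {k : ℕ} {X : Fin k → Type*}
    [∀ i, NormedAddCommGroup (X i)] [∀ i, NormedSpace 𝕜 (X i)]
    {Y : Type*} [NormedAddCommGroup Y] [NormedSpace 𝕜 Y]
    (T A : ContinuousMultilinearMap 𝕜 X Y) (hT : T ≠ 0) (hA : A ≠ 0) :
    (∀ lam : 𝕜, ‖T‖ ≤ ‖T + lam • A‖) ↔
      (0 : 𝕜) ∈ convexHull ℝ {lam : 𝕜 | ∃ (x : ℕ → ∀ i, X i) (y : ℕ → (Y →L[𝕜] 𝕜)),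
        (∀ n i, ‖x n i‖ = 1) ∧ (∀ n, ‖y n‖ = 1) ∧
        Tendsto (fun n => y n (T (x n))) atTop (𝓝 (‖T‖ : 𝕜)) ∧
        Tendsto (fun n => y n (A (x n))) atTop (𝓝 lam)} := by
  classical
  set Ω : Set 𝕜 := {lam : 𝕜 | ∃ (x : ℕ → ∀ i, X i) (y : ℕ → (Y →L[𝕜] 𝕜)),
        (∀ n i, ‖x n i‖ = 1) ∧ (∀ n, ‖y n‖ = 1) ∧
        Tendsto (fun n => y n (T (x n))) atTop (𝓝 (‖T‖ : 𝕜)) ∧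
        Tendsto (fun n => y n (A (x n))) atTop (𝓝 lam)} with hΩdef
  have hTpos : (0:ℝ) < ‖T‖ := norm_pos_iff.2 hT
  have hbound : ∀ (B : ContinuousMultilinearMap 𝕜 X Y) (x : ∀ i, X i) (y : Y →L[𝕜] 𝕜),
      (∀ i, ‖x i‖ = 1) → ‖y‖ = 1 → ‖y (B x)‖ ≤ ‖B‖ := by
    intro B x y hx hy
    calc ‖y (B x)‖ ≤ ‖y‖ * ‖B x‖ := y.le_opNorm _
      _ = ‖B x‖ := by rw [hy, one_mul]
      _ ≤ ‖B‖ * ∏ i, ‖x i‖ := B.le_opNorm x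
      _ = ‖B‖ := by
          rw [Finset.prod_congr rfl (fun i _ => hx i), Finset.prod_const_one, mul_one]
  have httend : Tendsto (fun n : ℕ => (1:ℝ) / (n + 1)) atTop (𝓝 0) :=
    tendsto_one_div_add_atTop_nhds_zero_nat
  constructor
  · -- hard direction
    intro h
    by_contra h0
    -- Ω is closed
    have hclosed : IsClosed Ω := by
      apply isClosed_of_closure_subset
      intro lam hlam
      have key2 : ∀ n : ℕ, ∃ (x : ∀ i, X i) (y : Y →L[𝕜] 𝕜), (∀ i, ‖x i‖ = 1) ∧ ‖y‖ = 1 ∧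
          ‖y (T x) - (‖T‖:𝕜)‖ ≤ (1:ℝ)/(n+1) ∧ ‖y (A x) - lam‖ ≤ 2 * ((1:ℝ)/(n+1)) := by
        intro n
        have hpos : (0:ℝ) < 1/((n:ℝ)+1) := by positivity
        obtain ⟨μ, hμΩ, hμd⟩ := Metric.mem_closure_iff.1 hlam _ hpos
        obtain ⟨x, y, hx, hy, hTt, hAt⟩ := hμΩ
        obtain ⟨N1, hN1⟩ := (Metric.tendsto_atTop.1 hTt) _ hpos
        obtain ⟨N2, hN2⟩ := (Metric.tendsto_atTop.1 hAt) _ hpos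
        refine ⟨x (max N1 N2), y (max N1 N2), hx _, hy _, ?_, ?_⟩
        · have := hN1 (max N1 N2) (le_max_left _ _)
          rw [dist_eq_norm] at this
          exact this.le
        · have h3 := hN2 (max N1 N2) (le_max_right _ _)
          rw [← dist_eq_norm]
          calc dist (y (max N1 N2) (A (x (max N1 N2)))) lam
              ≤ dist (y (max N1 N2) (A (x (max N1 N2)))) μ + dist μ lam := dist_triangle _ _ _
            _ ≤ 1/((n:ℝ)+1) + 1/((n:ℝ)+1) := by
                have := dist_comm lam μ ▸ hμd
                exact add_le_add (h3).le this.le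
            _ = 2 * ((1:ℝ)/(n+1)) := by ring
      choose xs ys hxs hys hT2 hA2 using key2
      refine ⟨xs, ys, hxs, hys, myTendstoHelper hT2 httend, myTendstoHelper hA2 ?_⟩
      simpa using httend.const_mul (2:ℝ)
    -- Ω is bounded
    have hbdd : Ω ⊆ Metric.closedBall (0:𝕜) ‖A‖ := by
      rintro lam ⟨x, y, hx, hy, hTt, hAt⟩
      rw [Metric.mem_closedBall, dist_zero_right]
      exact le_of_tendsto hAt.norm
        (Eventually.of_forall fun n => hbound A _ _ (hx n) (hy n))
    have hcomp : IsCompact Ω :=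
      (isCompact_closedBall (0:𝕜) ‖A‖).of_isClosed_subset hclosed hbdd
    obtain ⟨f, u, v, hfu, huv, hfv⟩ := _root_.geometric_hahn_banach_compact_closed
      (convex_convexHull ℝ Ω) (myIsCompact_convexHull hcomp)
      (convex_singleton (0:𝕜)) isClosed_singleton
      (Set.disjoint_singleton_right.2 h0)
    have hv0 : v < 0 := by
      have := hfv 0 rfl
      simpa using this
    obtain ⟨c, hc⟩ := myRep f
    -- construct the norming sequences
    have key := myKey T A hTpos hbound h c
    choose xs ys hxs hys hTb hAb using key
    have hμmem : ∀ n, ys n (A (xs n)) ∈ Metric.closedBall (0:𝕜) ‖A‖ := by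
      intro n
      rw [Metric.mem_closedBall, dist_zero_right]
      exact hbound A _ _ (hxs n) (hys n)
    obtain ⟨lam, _, φ, hφ, hφt⟩ :=
      (isCompact_closedBall (0:𝕜) ‖A‖).tendsto_subseq hμmem
    have hbtend : Tendsto (fun n : ℕ =>
        Real.sqrt (2 * ‖T‖ * (((1:ℝ)/(n+1))^2 + ((1:ℝ)/(n+1)) * (‖c‖ * ‖A‖))))
        atTop (𝓝 0) := by
      have hd : Tendsto (fun n : ℕ =>
          2 * ‖T‖ * (((1:ℝ)/(n+1))^2 + ((1:ℝ)/(n+1)) * (‖c‖ * ‖A‖))) atTop (𝓝 0) := by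
        have h1 : Tendsto (fun n : ℕ => ((1:ℝ)/(n+1))^2 + ((1:ℝ)/(n+1)) * (‖c‖ * ‖A‖))
            atTop (𝓝 0) := by
          have := (httend.pow 2).add (httend.mul_const (‖c‖ * ‖A‖))
          simpa using this
        have := h1.const_mul (2 * ‖T‖)
        simpa using this
      have h2 := (Real.continuous_sqrt.tendsto 0).comp hd
      simpa only [Function.comp_def, Real.sqrt_zero] using h2
    have hlamΩ : lam ∈ Ω := by
      refine ⟨fun n => xs (φ n), fun n => ys (φ n), fun n => hxs (φ n), fun n => hys (φ n),
        myTendstoHelper (fun n => hTb (φ n)) (hbtend.comp hφ.tendsto_atTop), hφt⟩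
    have h1 : (0:ℝ) ≤ re ((starRingEnd 𝕜) c * lam) := by
      have hcont : Tendsto (fun n => re ((starRingEnd 𝕜) c * (ys (φ n) (A (xs (φ n))))))
          atTop (𝓝 (re ((starRingEnd 𝕜) c * lam))) :=
        (RCLike.continuous_re.tendsto _).comp (hφt.const_mul _)
      have hneg : Tendsto (fun n => -((1:ℝ)/(φ n + 1))) atTop (𝓝 0) := by
        simpa using (httend.comp hφ.tendsto_atTop).neg
      exact le_of_tendsto_of_tendsto' hneg hcont (fun n => hAb (φ n))
    have h2 : f lam < u := hfu lam (subset_convexHull ℝ Ω hlamΩ)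
    rw [hc] at h2
    linarith
  · -- easy direction
    intro hmem lam
    set H : Set 𝕜 := {μ : 𝕜 | ‖T‖ + re (lam * μ) ≤ ‖T + lam • A‖} with hH
    have hHconv : Convex ℝ H := by
      have : H = {μ : 𝕜 | re (lam * μ) ≤ ‖T + lam • A‖ - ‖T‖} := by
        ext μ
        simp only [hH, Set.mem_setOf_eq]
        constructor <;> intro <;> linarith
      rw [this]
      apply convex_halfSpace_le
      constructor
      · intro a b; rw [mul_add, map_add]
      · intro r a; rw [mul_smul_comm, smul_re, smul_eq_mul]
    have hsub : Ω ⊆ H := by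
      rintro μ ⟨x, y, hx, hy, hTt, hAt⟩
      have hcomb : Tendsto (fun n => y n (T (x n)) + lam * y n (A (x n)))
          atTop (𝓝 ((‖T‖:𝕜) + lam * μ)) := hTt.add (hAt.const_mul lam)
      have hnb : ‖(‖T‖:𝕜) + lam * μ‖ ≤ ‖T + lam • A‖ := by
        apply le_of_tendsto hcomb.norm
        filter_upwards with n
        have heqv : y n (T (x n)) + lam * y n (A (x n)) = y n ((T + lam • A) (x n)) := by
          simp [ContinuousMultilinearMap.add_apply, ContinuousMultilinearMap.smul_apply,
            map_add, map_smul, smul_eq_mul]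
        rw [heqv]
        exact hbound _ _ _ (hx n) (hy n)
      show ‖T‖ + re (lam * μ) ≤ ‖T + lam • A‖
      calc ‖T‖ + re (lam * μ) = re ((‖T‖:𝕜) + lam * μ) := by simp
        _ ≤ ‖(‖T‖:𝕜) + lam * μ‖ := re_le_norm _
        _ ≤ ‖T + lam • A‖ := hnb
    have h0H : (0:𝕜) ∈ H := convexHull_min hsub hHconv hmem
    have : ‖T‖ + re (lam * (0:𝕜)) ≤ ‖T + lam • A‖ := h0H
    simpa using this
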